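/- arXiv:2603.19528 — 4 statements merged into one kernel-verified Lean document; each statement's English description precedes it below -/
import Mathlib

section
/- Let (a_n)_{n≥0} be a complex sequence converging to 0. Suppose the linear subspace K of c_0(ℤ_{≥0}) spanned by all shifted sequences (a_{n+m})_{n≥0}, m ∈ ℤ_{≥0}, is finite dimensional. Then there exist k ∈ ℕ, a matrix B ∈ M_k(ℂ), and vectors λ, γ ∈ ℂ^k such that a_n = ᵗλ B^n γ for all n ∈ ℤ_{≥0}. -/
/-- The left shift operator on sequences, as a linear map. -/
def shiftL : (ℕ → ℂ) →ₗ[ℂ] (ℕ → ℂ) where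
  toFun f := fun n => f (n + 1)
  map_add' _ _ := rfl
  map_smul' _ _ := rfl

/-- If `a : ℕ → ℂ` tends to 0 and the span of its shifts is finite
dimensional, then `a n = ᵗλ Bⁿ γ` for some matrix `B` and vectors `λ, γ`. -/
theorem stmt0 (a : ℕ → ℂ)
    (ha : Filter.Tendsto a Filter.atTop (nhds 0))
    (hfin : FiniteDimensional ℂ
      (Submodule.span ℂ {x : ℕ → ℂ | ∃ m : ℕ, x = fun n => a (n + m)})) :
    ∃ (k : ℕ) (B : Matrix (Fin k) (Fin k) ℂ) (l g : Fin k → ℂ),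
      ∀ n : ℕ, a n = dotProduct l ((B ^ n).mulVec g) := by
  set s : Set (ℕ → ℂ) := {x : ℕ → ℂ | ∃ m : ℕ, x = fun n => a (n + m)} with hs
  set K : Submodule ℂ (ℕ → ℂ) := Submodule.span ℂ s with hK
  haveI : FiniteDimensional ℂ K := hfin
  -- shiftL maps K into K
  have hS : ∀ x ∈ K, shiftL x ∈ K := by
    intro x hx
    have : K.map shiftL ≤ K := by
      rw [hK, Submodule.map_span]
      apply Submodule.span_le.mpr
      rintro y ⟨z, ⟨m, rfl⟩, rfl⟩
      apply Submodule.subset_span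
      exact ⟨m + 1, by funext n; show a (n + 1 + m) = a (n + (m + 1)); congr 1; omega⟩
    exact this ⟨x, hx, rfl⟩
  let S : K →ₗ[ℂ] K := shiftL.restrict hS
  have haK : a ∈ K := by
    apply Submodule.subset_span
    exact ⟨0, by funext n; simp⟩
  let aK : K := ⟨a, haK⟩
  -- iterated shift
  have hiter : ∀ (n : ℕ) (x : K) (m : ℕ), ((S ^ n) x : ℕ → ℂ) m = (x : ℕ → ℂ) (m + n) := by
    intro n
    induction n with
    | zero => intro x m; simp
    | succ n ih =>
      intro x m
      rw [pow_succ, Module.End.mul_apply]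
      rw [ih (S x) m]
      show ((shiftL.restrict hS) x : ℕ → ℂ) (m + n) = _
      simp only [LinearMap.restrict_coe_apply]
      show (x : ℕ → ℂ) (m + n + 1) = (x : ℕ → ℂ) (m + (n + 1))
      ring_nf
  let b := Module.finBasis ℂ K
  refine ⟨Module.finrank ℂ K, LinearMap.toMatrix b b S, fun i => (b i : ℕ → ℂ) 0,
    b.repr aK, fun n => ?_⟩
  have hpow : (LinearMap.toMatrix b b S) ^ n = LinearMap.toMatrix b b (S ^ n) := by
    induction n with
    | zero => simp [LinearMap.toMatrix_one]
    | succ n ih => rw [pow_succ, pow_succ, ih, LinearMap.toMatrix_mul]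
  rw [hpow, LinearMap.toMatrix_mulVec_repr]
  have : ((S ^ n) aK : ℕ → ℂ) 0 = a n := by rw [hiter n aK 0]; simp [aK]
  rw [← this]
  conv_lhs => rw [← b.sum_repr ((S ^ n) aK)]
  rw [dotProduct]
  push_cast [Submodule.coe_sum]
  rw [Finset.sum_apply]
  apply Finset.sum_congr rfl
  intro i _
  simp [mul_comm]
end

section
/- Let (a_n)_{n≥0} be a complex sequence converging to 0 such that the linear span of all its shifts (a_{n+m})_{n≥0} for m ∈ ℤ_{≥0} is finite dimensional. Then (a_n) decays exponentially: there exist M > 0 and 0 < A < 1 such that |a_n| ≤ M·Aⁿ for all n ∈ ℤ_{≥0}. -/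
open Filter BoundedContinuousFunction Topology

set_option synthInstance.maxHeartbeats 1000000
set_option maxHeartbeats 10000000

/-- If `a : ℕ → ℂ` tends to 0 and the span of its shifts is finite
dimensional, then `a` decays exponentially. -/
theorem stmt1 (a : ℕ → ℂ)
    (ha : Filter.Tendsto a Filter.atTop (nhds 0))
    (hfin : FiniteDimensional ℂ
      (Submodule.span ℂ {x : ℕ → ℂ | ∃ m : ℕ, x = fun n => a (n + m)})) :
    ∃ M : ℝ, 0 < M ∧ ∃ A : ℝ, 0 < A ∧ A < 1 ∧
      ∀ n : ℕ, ‖a n‖ ≤ M * A ^ n := by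
  classical
  have hnorm : Tendsto (fun n => ‖a n‖) atTop (𝓝 0) := by
    simpa using ha.norm
  obtain ⟨C, hC⟩ : ∃ C, ∀ n, ‖a n‖ ≤ C := by
    obtain ⟨C, hC⟩ := hnorm.bddAbove_range
    exact ⟨C, fun n => hC ⟨n, rfl⟩⟩
  -- the shifts as bounded functions
  set g : ℕ → (BoundedContinuousFunction ℕ ℂ) := fun m =>
    BoundedContinuousFunction.ofNormedAddCommGroup (fun n => a (n + m))
      continuous_of_discreteTopology C (fun n => hC (n + m)) with hgdef
  have hg : ∀ m n, g m n = a (n + m) := fun m n => rfl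
  -- shift tails tend to 0 in norm
  have hgnorm : Tendsto (fun k => ‖g k‖) atTop (𝓝 0) := by
    rw [Metric.tendsto_atTop]
    intro ε hε
    obtain ⟨N, hN⟩ := (Metric.tendsto_atTop.1 hnorm) (ε / 2) (by positivity)
    refine ⟨N, fun k hk => ?_⟩
    have hb : ‖g k‖ ≤ ε / 2 := by
      refine (BoundedContinuousFunction.norm_le (by positivity)).2 fun n => ?_
      have := hN (n + k) (le_trans hk (Nat.le_add_left k n))
      rw [Real.dist_eq, sub_zero, abs_of_nonneg (norm_nonneg _)] at this
      exact le_of_lt this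
    have : dist ‖g k‖ 0 = ‖g k‖ := by
      rw [Real.dist_eq, sub_zero, abs_of_nonneg (norm_nonneg _)]
    rw [this]; linarith
  -- the shift operator
  set S : BoundedContinuousFunction ℕ ℂ →ₗ[ℂ] BoundedContinuousFunction ℕ ℂ :=
    { toFun := fun f => f.compContinuous ⟨fun n => n + 1, continuous_of_discreteTopology⟩
      map_add' := fun f₁ f₂ => by ext n; rfl
      map_smul' := fun c f => by ext n; rfl } with hSdef
  have hSapp : ∀ (f : BoundedContinuousFunction ℕ ℂ) (n : ℕ), S f n = f (n + 1) := fun f n => rfl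
  have hSnorm : ∀ f, ‖S f‖ ≤ ‖f‖ := fun f =>
    BoundedContinuousFunction.norm_compContinuous_le f _
  have hSg : ∀ m, S (g m) = g (m + 1) := by
    intro m; ext n
    rw [hSapp, hg, hg]
    congr 1; omega
  -- the span of the shifts
  set E : Submodule ℂ (BoundedContinuousFunction ℕ ℂ) := Submodule.span ℂ (Set.range g) with hEdef
  have hSE : ∀ x ∈ E, S x ∈ E := by
    intro x hx
    have : E ≤ E.comap S := by
      rw [hEdef]
      refine Submodule.span_le.2 ?_
      rintro _ ⟨m, rfl⟩
      refine Submodule.mem_comap.2 ?_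
      rw [hSg]
      exact Submodule.subset_span ⟨m + 1, rfl⟩
    exact this hx
  -- E is finite dimensional
  haveI hEfin : FiniteDimensional ℂ E := by
    set π : BoundedContinuousFunction ℕ ℂ →ₗ[ℂ] (ℕ → ℂ) :=
      { toFun := fun f => ⇑f
        map_add' := fun f₁ f₂ => rfl
        map_smul' := fun c f => rfl } with hπdef
    have hπinj : Function.Injective π := fun f₁ f₂ h =>
      BoundedContinuousFunction.ext fun n => congrFun h n
    have hmap : E.map π ≤ Submodule.span ℂ {x : ℕ → ℂ | ∃ m : ℕ, x = fun n => a (n + m)} := by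
      rw [hEdef, Submodule.map_span]
      refine Submodule.span_mono ?_
      rintro _ ⟨_, ⟨m, rfl⟩, rfl⟩
      exact ⟨m, rfl⟩
    haveI : FiniteDimensional ℂ (E.map π) := Submodule.finiteDimensional_of_le hmap
    exact Module.Finite.equiv (Submodule.equivMapOfInjective π hπinj E).symm
  -- restrict the shift to E, get a continuous linear map
  set T : E →ₗ[ℂ] E := S.restrict hSE with hTdef
  set T' : E →L[ℂ] E := LinearMap.toContinuousLinearMap T with hT'def
  have hT'T : ∀ (x : E), T' x = T x := fun x =>
    congrFun (LinearMap.coe_toContinuousLinearMap' T) x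
  have hT'app : ∀ (x : E), ((T' x : E) : BoundedContinuousFunction ℕ ℂ) = S (x : BoundedContinuousFunction ℕ ℂ) := by
    intro x
    rw [hT'T, hTdef, LinearMap.restrict_apply]
  -- powers on generators
  have hTpow : ∀ (m : ℕ) (h : g m ∈ E) (n : ℕ),
      (((T' ^ n) ⟨g m, h⟩ : E) : BoundedContinuousFunction ℕ ℂ) = g (m + n) := by
    intro m h n
    induction n with
    | zero => simp
    | succ n ih =>
      have h0 : (T' ^ (n + 1)) ⟨g m, h⟩ = T' ((T' ^ n) ⟨g m, h⟩) := by
        rw [pow_succ']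
        rfl
      rw [h0, hT'app, ih, hSg]
      rfl
  have hgE : ∀ m, g m ∈ E := fun m => Submodule.subset_span ⟨m, rfl⟩
  -- pointwise convergence of powers to 0 on E
  have key : ∀ x : E, Tendsto (fun n => (T' ^ n) x) atTop (𝓝 0) := by
    rintro ⟨x, hx⟩
    induction hx using Submodule.span_induction with
    | mem x hxs =>
      obtain ⟨m, rfl⟩ := hxs
      rw [tendsto_zero_iff_norm_tendsto_zero]
      have heq : ∀ n, ‖(T' ^ n) ⟨g m, hgE m⟩‖ = ‖g (m + n)‖ := by
        intro n
        change ‖(((T' ^ n) ⟨g m, hgE m⟩ : E) : BoundedContinuousFunction ℕ ℂ)‖ = _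
        rw [hTpow]
      simp only [heq]
      have hm : Tendsto (fun n : ℕ => m + n) atTop atTop := by
        simpa [Nat.add_comm] using tendsto_add_atTop_nat m
      simpa [Function.comp_def] using hgnorm.comp hm
    | zero =>
      show Tendsto (fun n : ℕ => (T' ^ n) (0 : E)) atTop (𝓝 0)
      simpa using tendsto_const_nhds
    | add x y hx hy ihx ihy =>
      have : ∀ n, (T' ^ n) (⟨x, hx⟩ + ⟨y, hy⟩ : E) = (T' ^ n) ⟨x, hx⟩ + (T' ^ n) ⟨y, hy⟩ :=
        fun n => map_add _ _ _
      have h := ihx.add ihy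
      simp only [add_zero] at h
      convert h using 2 with n
      · exact this n
    | smul c x hx ih =>
      have : ∀ n, (T' ^ n) (c • (⟨x, hx⟩ : E)) = c • (T' ^ n) ⟨x, hx⟩ :=
        fun n => map_smul _ _ _
      have h := ih.const_smul c
      simp only [smul_zero] at h
      convert h using 2 with n
      · exact this n
  -- operator norm convergence via a basis
  set b : Module.Basis (Fin (Module.finrank ℂ E)) ℂ E := Module.finBasis ℂ E with hbdef
  set u : ℕ → ℝ := fun n =>
    ∑ i, ‖LinearMap.toContinuousLinearMap (b.coord i)‖ * ‖(T' ^ n) (b i)‖ with hudef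
  have hu0 : Tendsto u atTop (𝓝 0) := by
    have : Tendsto (fun n => ∑ i : Fin (Module.finrank ℂ E),
        ‖LinearMap.toContinuousLinearMap (b.coord i)‖ * ‖(T' ^ n) (b i)‖) atTop
        (𝓝 (∑ i : Fin (Module.finrank ℂ E), (0:ℝ))) := by
      refine tendsto_finset_sum _ fun i _ => ?_
      have := (tendsto_zero_iff_norm_tendsto_zero.1 (key (b i))).const_mul
        ‖LinearMap.toContinuousLinearMap (b.coord i)‖
      simpa using this
    simpa only [Finset.sum_const_zero] using this
  have hun : ∀ n, ‖T' ^ n‖ ≤ u n := by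
    intro n
    refine ContinuousLinearMap.opNorm_le_bound _ ?_ fun x => ?_
    · exact Finset.sum_nonneg fun i _ =>
        mul_nonneg (ContinuousLinearMap.opNorm_nonneg _) (norm_nonneg _)
    · calc ‖(T' ^ n) x‖ = ‖(T' ^ n) (∑ i, b.repr x i • b i)‖ := by rw [b.sum_repr x]
        _ = ‖∑ i, b.repr x i • (T' ^ n) (b i)‖ := by rw [map_sum (T' ^ n)]; simp only [map_smul]
        _ ≤ ∑ i, ‖b.repr x i • (T' ^ n) (b i)‖ := norm_sum_le _ _
        _ = ∑ i, ‖b.repr x i‖ * ‖(T' ^ n) (b i)‖ := by simp only [norm_smul]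
        _ ≤ ∑ i, (‖LinearMap.toContinuousLinearMap (b.coord i)‖ * ‖x‖) * ‖(T' ^ n) (b i)‖ := by
            refine Finset.sum_le_sum fun i _ => ?_
            refine mul_le_mul_of_nonneg_right ?_ (norm_nonneg _)
            have := (LinearMap.toContinuousLinearMap (b.coord i)).le_opNorm x
            simpa only [LinearMap.coe_toContinuousLinearMap', Module.Basis.coord_apply] using this
        _ = u n * ‖x‖ := by rw [hudef, Finset.sum_mul]; exact Finset.sum_congr rfl fun i _ => by ring
  -- get N with ‖T'^N‖ ≤ 1/2
  obtain ⟨N, hN1, hN2⟩ : ∃ N, 1 ≤ N ∧ ‖T' ^ N‖ ≤ 1 / 2 := by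
    have h1 : ∀ᶠ n in atTop, u n < 1 / 2 := hu0.eventually (gt_mem_nhds (by norm_num))
    have h2 : ∀ᶠ n in atTop, 1 ≤ n := eventually_ge_atTop 1
    obtain ⟨N, hNa, hNb⟩ := (h2.and h1).exists
    exact ⟨N, hNa, le_of_lt (lt_of_le_of_lt (hun N) hNb)⟩
  -- set up the geometric bound
  set A : ℝ := ((1:ℝ)/2) ^ ((N:ℝ)⁻¹) with hAdef
  have hNpos : (0:ℝ) < N := by exact_mod_cast hN1
  have hA0 : 0 < A := Real.rpow_pos_of_pos (by norm_num) _
  have hA1 : A < 1 := Real.rpow_lt_one (by norm_num) (by norm_num) (by positivity)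
  have hAN : A ^ N = 1 / 2 := by
    rw [hAdef, ← Real.rpow_natCast (((1:ℝ)/2) ^ ((N:ℝ)⁻¹)) N, ← Real.rpow_mul (by norm_num),
      inv_mul_cancel₀ (ne_of_gt hNpos), Real.rpow_one]
  set K : ℝ := max 1 ‖T'‖ with hKdef
  have hK1 : (1:ℝ) ≤ K := le_max_left _ _
  have hpowK : ∀ k : ℕ, ‖T' ^ k‖ ≤ K ^ k := by
    intro k
    induction k with
    | zero =>
      rw [pow_zero, pow_zero]
      calc ‖(1 : E →L[ℂ] E)‖ = ‖ContinuousLinearMap.id ℂ E‖ := by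
            rw [ContinuousLinearMap.one_def]
        _ ≤ 1 := ContinuousLinearMap.norm_id_le
    | succ k ih =>
      have hKpos : (0:ℝ) < K := lt_of_lt_of_le one_pos hK1
      calc ‖T' ^ (k+1)‖ = ‖(T' ^ k).comp T'‖ := by
            rw [pow_succ]; rfl
        _ ≤ ‖T' ^ k‖ * ‖T'‖ := ContinuousLinearMap.opNorm_comp_le _ _
        _ ≤ K ^ k * K := mul_le_mul ih (le_max_right _ _)
            (ContinuousLinearMap.opNorm_nonneg _) (le_of_lt (pow_pos hKpos k))
        _ = K ^ (k+1) := by ring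
  set C0 : ℝ := 2 * K ^ N with hC0def
  have hKpos : (0:ℝ) < K := lt_of_lt_of_le one_pos hK1
  have hC0pos : 0 < C0 := by
    rw [hC0def]; exact mul_pos two_pos (pow_pos hKpos N)
  have geom : ∀ n, ‖T' ^ n‖ ≤ C0 * A ^ n := by
    intro n
    induction n using Nat.strong_induction_on with
    | _ n ih =>
      rcases lt_or_ge n N with h | h
      · have h1 : ‖T' ^ n‖ ≤ K ^ N :=
          le_trans (hpowK n) (pow_le_pow_right₀ hK1 (le_of_lt h))
        have h2 : A ^ N ≤ A ^ n := pow_le_pow_of_le_one (le_of_lt hA0) (le_of_lt hA1) (le_of_lt h)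
        calc ‖T' ^ n‖ ≤ K ^ N := h1
          _ = C0 * (1/2) := by rw [hC0def]; ring
          _ = C0 * A ^ N := by rw [hAN]
          _ ≤ C0 * A ^ n := by
              exact mul_le_mul_of_nonneg_left h2 (le_of_lt hC0pos)
      · have hlt : n - N < n := by omega
        have heq : T' ^ n = T' ^ (n - N) * T' ^ N := by
          rw [← pow_add]; congr 1; omega
        rw [heq]
        calc ‖T' ^ (n - N) * T' ^ N‖ ≤ ‖T' ^ (n - N)‖ * ‖T' ^ N‖ :=
            ContinuousLinearMap.opNorm_comp_le _ _
          _ ≤ (C0 * A ^ (n - N)) * (1/2) := by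
              refine mul_le_mul (ih _ hlt) hN2 (ContinuousLinearMap.opNorm_nonneg _) ?_
              exact mul_nonneg (le_of_lt hC0pos) (pow_nonneg (le_of_lt hA0) _)
          _ = C0 * (A ^ (n - N) * A ^ N) := by rw [hAN]; ring
          _ = C0 * A ^ n := by rw [← pow_add]; congr 2; omega
  -- conclude
  set aE : E := ⟨g 0, hgE 0⟩ with haEdef
  have hM0 : 0 ≤ ‖aE‖ * C0 := mul_nonneg (norm_nonneg _) (le_of_lt hC0pos)
  refine ⟨‖aE‖ * C0 + 1, by linarith, A, hA0, hA1, fun n => ?_⟩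
  have h1 : ‖a n‖ ≤ ‖g n‖ := by
    have := BoundedContinuousFunction.norm_coe_le_norm (g n) 0
    rw [hg] at this
    simpa using this
  have h2 : ‖g n‖ = ‖(T' ^ n) aE‖ := by
    have : (((T' ^ n) aE : E) : BoundedContinuousFunction ℕ ℂ) = g (0 + n) := hTpow 0 (hgE 0) n
    rw [zero_add] at this
    change _ = ‖(((T' ^ n) aE : E) : BoundedContinuousFunction ℕ ℂ)‖
    rw [this]
  have h3 : ‖(T' ^ n) aE‖ ≤ ‖T' ^ n‖ * ‖aE‖ := (T' ^ n).le_opNorm aE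
  have h4 : ‖T' ^ n‖ * ‖aE‖ ≤ (C0 * A ^ n) * ‖aE‖ :=
    mul_le_mul_of_nonneg_right (geom n) (norm_nonneg _)
  have hApos : (0:ℝ) < A ^ n := by positivity
  calc ‖a n‖ ≤ ‖T' ^ n‖ * ‖aE‖ := by rw [← h2] at h3; exact le_trans h1 h3
    _ ≤ (C0 * A ^ n) * ‖aE‖ := h4
    _ = (‖aE‖ * C0) * A ^ n := by ring
    _ ≤ (‖aE‖ * C0 + 1) * A ^ n := by nlinarith
end

section
/- Let k ∈ ℕ, B ∈ M_k(ℂ), λ, γ ∈ ℂ^k, and set a_n = ᵗλ B^n γ. Suppose ᵗλ ℂ[B] = ℂ^k (as row vectors) and ℂ[B] γ = ℂ^k (as column vectors), where ℂ[B] denotes the algebra of polynomials in B. If a_n → 0 as n → ∞, then every eigenvalue of B has absolute value strictly less than 1. -/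
open Matrix Polynomial Filter

/-- cyclicity of row vector `l` and column vector `g` under `ℂ[B]`,
plus `ᵗl Bⁿ g → 0`, forces all eigenvalues of `B` to lie in the open unit disk. -/
theorem stmt2 (k : ℕ) (B : Matrix (Fin k) (Fin k) ℂ) (l g : Fin k → ℂ)
    (hl : Submodule.span ℂ
      {v : Fin k → ℂ | ∃ q : Polynomial ℂ, v = Matrix.vecMul l (Polynomial.aeval B q)} = ⊤)
    (hg : Submodule.span ℂ
      {v : Fin k → ℂ | ∃ q : Polynomial ℂ, v = (Polynomial.aeval B q).mulVec g} = ⊤)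
    (ha : Filter.Tendsto (fun n : ℕ => dotProduct l ((B ^ n).mulVec g))
      Filter.atTop (nhds 0)) :
    ∀ μ ∈ spectrum ℂ B, ‖μ‖ < 1 := by
  have hcomm : ∀ (q : Polynomial ℂ) (n : ℕ), B ^ n * aeval B q = aeval B q * B ^ n := by
    intro q n
    have := (Commute.all ((X : Polynomial ℂ) ^ n) q).map (aeval B)
    simpa [map_pow] using this.eq
  -- Step 1
  have step1 : ∀ r : Polynomial ℂ,
      Tendsto (fun n : ℕ => l ⬝ᵥ ((aeval B r * B ^ n).mulVec g)) atTop (nhds 0) := by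
    intro r
    induction r using Polynomial.induction_on' with
    | add p q hp hq =>
      simpa [map_add, add_mul, Matrix.add_mulVec, dotProduct_add] using hp.add hq
    | monomial i a =>
      have h1 : Tendsto (fun n : ℕ => l ⬝ᵥ ((B ^ (n + i)).mulVec g)) atTop (nhds 0) :=
        ha.comp (tendsto_add_atTop_nat i)
      have h2 := h1.const_mul a
      rw [mul_zero] at h2
      convert h2 using 2 with n
      rw [aeval_monomial]
      have h3 : (algebraMap ℂ (Matrix (Fin k) (Fin k) ℂ)) a * B ^ i * B ^ n
          = a • B ^ (n + i) := by
        rw [Algebra.algebraMap_eq_smul_one, smul_mul_assoc, smul_mul_assoc, one_mul,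
          ← pow_add, add_comm i n]
      rw [h3, Matrix.smul_mulVec, dotProduct_smul, smul_eq_mul]
  -- Step 2
  have step2 : ∀ v : Fin k → ℂ, ∀ r : Polynomial ℂ,
      Tendsto (fun n : ℕ => l ⬝ᵥ ((aeval B r * B ^ n).mulVec v)) atTop (nhds 0) := by
    let S : Submodule ℂ (Fin k → ℂ) :=
      { carrier := {v | ∀ r : Polynomial ℂ,
          Tendsto (fun n : ℕ => l ⬝ᵥ ((aeval B r * B ^ n).mulVec v)) atTop (nhds 0)}
        add_mem' := fun {v w} hv hw r => by
          simpa [Matrix.mulVec_add, dotProduct_add] using (hv r).add (hw r)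
        zero_mem' := fun r => by simp
        smul_mem' := fun c {v} hv r => by
          have h := (hv r).const_mul c
          rw [mul_zero] at h
          simpa [Matrix.mulVec_smul, dotProduct_smul] using h }
    have hS : Submodule.span ℂ
        {v : Fin k → ℂ | ∃ q : Polynomial ℂ, v = (aeval B q).mulVec g} ≤ S := by
      apply Submodule.span_le.mpr
      rintro v ⟨q, rfl⟩ r
      have key : ∀ n : ℕ, (aeval B r * B ^ n) * aeval B q = aeval B (r * q) * B ^ n := by
        intro n
        rw [mul_assoc, hcomm q n, ← mul_assoc, ← _root_.map_mul]
      have := step1 (r * q)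
      convert this using 2 with n
      rw [Matrix.mulVec_mulVec, key n]
    intro v r
    have hv : v ∈ S := by
      have : v ∈ Submodule.span ℂ
          {v : Fin k → ℂ | ∃ q : Polynomial ℂ, v = (aeval B q).mulVec g} := by
        rw [hg]; trivial
      exact hS this
    exact hv r
  -- Step 3
  have step3 : ∀ w v : Fin k → ℂ,
      Tendsto (fun n : ℕ => w ⬝ᵥ ((B ^ n).mulVec v)) atTop (nhds 0) := by
    intro w v
    let T : Submodule ℂ (Fin k → ℂ) :=
      { carrier := {w | Tendsto (fun n : ℕ => w ⬝ᵥ ((B ^ n).mulVec v)) atTop (nhds 0)}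
        add_mem' := fun {x y} hx hy => by
          simpa [add_dotProduct] using hx.add hy
        zero_mem' := by simp
        smul_mem' := fun c {x} hx => by
          have h := hx.const_mul c
          rw [mul_zero] at h
          simpa [smul_dotProduct, smul_eq_mul] using h }
    have hT : Submodule.span ℂ
        {w : Fin k → ℂ | ∃ q : Polynomial ℂ, w = Matrix.vecMul l (aeval B q)} ≤ T := by
      apply Submodule.span_le.mpr
      rintro w ⟨q, rfl⟩
      show Tendsto (fun n : ℕ => (l ᵥ* aeval B q) ⬝ᵥ ((B ^ n).mulVec v)) atTop (nhds 0)
      have heq : ∀ n : ℕ, (l ᵥ* aeval B q) ⬝ᵥ ((B ^ n).mulVec v)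
          = l ⬝ᵥ ((aeval B q * B ^ n).mulVec v) := by
        intro n
        rw [Matrix.dotProduct_mulVec, Matrix.vecMul_vecMul, ← Matrix.dotProduct_mulVec]
      simpa [heq] using step2 v q
    have hw : w ∈ T := hT (by rw [hl]; trivial)
    exact hw
  -- Eigenvalue argument
  intro μ hμ
  have hμ' : Module.End.HasEigenvalue (Matrix.toLin' B) μ := by
    rw [Module.End.hasEigenvalue_iff_mem_spectrum]
    rwa [← AlgEquiv.spectrum_eq (Matrix.toLinAlgEquiv' : Matrix (Fin k) (Fin k) ℂ ≃ₐ[ℂ] _)] at hμ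
  obtain ⟨v, hv⟩ := hμ'.exists_hasEigenvector
  have hv0 : v ≠ 0 := hv.right
  have hv' : B.mulVec v = μ • v := by
    simpa [Matrix.toLin'_apply] using hv.apply_eq_smul
  have hpow : ∀ n : ℕ, (B ^ n).mulVec v = μ ^ n • v := by
    intro n
    induction n with
    | zero => simp
    | succ m ih =>
      rw [pow_succ, ← Matrix.mulVec_mulVec, hv', Matrix.mulVec_smul, ih, smul_smul,
        pow_succ, mul_comm]
  obtain ⟨i, hi⟩ : ∃ i, v i ≠ 0 := Function.ne_iff.mp hv0
  have h1 : Tendsto (fun n : ℕ => (Pi.single i 1 : Fin k → ℂ) ⬝ᵥ ((B ^ n).mulVec v))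
      atTop (nhds 0) := step3 _ v
  have h2 : Tendsto (fun n : ℕ => μ ^ n * v i) atTop (nhds 0) := by
    convert h1 using 2 with n
    rw [hpow n, dotProduct_smul]
    simp [single_dotProduct]
  have h3 : Tendsto (fun n : ℕ => μ ^ n) atTop (nhds 0) := by
    have := h2.const_mul (v i)⁻¹
    rw [mul_zero] at this
    convert this using 2 with n
    field_simp
  by_contra hge
  push_neg at hge
  have hlow : ∀ n : ℕ, (1 : ℝ) ≤ ‖μ ^ n‖ := by
    intro n
    rw [norm_pow]
    calc (1 : ℝ) = 1 ^ n := (one_pow n).symm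
    _ ≤ ‖μ‖ ^ n := pow_le_pow_left₀ zero_le_one hge n
  have h4 : Tendsto (fun n : ℕ => ‖μ ^ n‖) atTop (nhds 0) :=
    (continuous_norm.tendsto 0).comp h3 |>.congr (fun n => rfl) |>.mono_right
      (by simp [le_refl])
  obtain ⟨n, hn⟩ := (h4.eventually (eventually_lt_nhds zero_lt_one)).exists
  exact absurd (hlow n) (not_le.mpr hn)
end

section
/- Let k ∈ ℕ, λ ∈ ℂ with |λ| ≠ 1, and let M ∈ M_k(ℂ) be the matrix with M_{ij} = |λ|² for i < j and M_{ij} = 1 for i ≥ j. Then the characteristic polynomial of M equals ((x − 1 + |λ|²)^k − |λ|² x^k)/(1 − |λ|²), the eigenvalues of M are (|λ|² − 1)/(|λ|^{2/k} exp(2πl√(−1)/k) − 1) for l = 0,...,k−1, and the spectral radius of M is (|λ|² − 1)/(|λ|^{2/k} − 1). -/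
open Polynomial Matrix

variable {R : Type*} [CommRing R]

def Amat (x a : R) (k : ℕ) : Matrix (Fin k) (Fin k) R :=
  Matrix.of fun i j => if i = j then x - 1 else if i < j then -a else -1

def Bmat (x a : R) (k : ℕ) : Matrix (Fin k) (Fin k) R :=
  Matrix.of fun i j =>
    if i = j then (if (i : ℕ) = 0 then -1 else x - 1) else if i < j then -a else -1

lemma Bmat_val (x a : R) (m : ℕ) (i j : Fin m) :
    Bmat x a m i j = if (i:ℕ) = (j:ℕ) then (if (i:ℕ) = 0 then -1 else x - 1)
      else if (i:ℕ) < (j:ℕ) then -a else -1 := by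
  simp only [Bmat, Matrix.of_apply, Fin.ext_iff, Fin.lt_def]

lemma Amat_val (x a : R) (m : ℕ) (i j : Fin m) :
    Amat x a m i j = if (i:ℕ) = (j:ℕ) then x - 1
      else if (i:ℕ) < (j:ℕ) then -a else -1 := by
  simp only [Amat, Matrix.of_apply, Fin.ext_iff, Fin.lt_def]

lemma succAbove_one_val (k : ℕ) (j : Fin (k+1)) :
    (((1 : Fin (k+2)).succAbove j : Fin (k+2)) : ℕ)
      = if (j:ℕ) < 1 then (j:ℕ) else (j:ℕ)+1 := by
  simp only [Fin.succAbove, apply_ite (Fin.val : Fin (k+2) → ℕ), Fin.coe_castSucc,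
    Fin.val_succ, Fin.lt_def, Fin.val_one]

lemma detB (x a : R) : ∀ k : ℕ, (Bmat x a (k + 1)).det = -(x + a - 1) ^ k := by
  intro k
  induction k with
  | zero => simp [Bmat, Matrix.det_fin_one]
  | succ k ih =>
    have h01 : (0 : Fin (k + 2)) ≠ 1 := by simp [Fin.ext_iff]
    have hdet := Matrix.det_updateRow_add_smul_self (Bmat x a (k + 2)) h01 (-1)
    set B' := Matrix.updateRow (Bmat x a (k + 2)) 0
        (Bmat x a (k + 2) 0 + (-1 : R) • Bmat x a (k + 2) 1) with hB'
    have hrow : ∀ j : Fin (k + 2), B' 0 j = if j = 1 then -(x + a - 1) else 0 := by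
      intro j
      rw [hB', Matrix.updateRow_self]
      simp only [Bmat, Matrix.of_apply, Pi.add_apply, Pi.smul_apply, smul_eq_mul, neg_one_mul,
        Fin.ext_iff, Fin.lt_def]
      have hv0 : ((0 : Fin (k+2)) : ℕ) = 0 := rfl
      have hv1 : ((1 : Fin (k+2)) : ℕ) = 1 := rfl
      split_ifs <;> first | ring1 | omega | (exfalso; first | assumption | omega)
    have hsub : (B'.submatrix Fin.succ ((1 : Fin (k+2)).succAbove)) = Bmat x a (k+1) := by
      ext i j
      have h1 : B' i.succ = Bmat x a (k + 2) i.succ :=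
        Matrix.updateRow_ne (Fin.succ_ne_zero i)
      rw [Matrix.submatrix_apply, h1, Bmat_val, Bmat_val]
      rw [Fin.val_succ, succAbove_one_val]
      split_ifs <;> first | rfl | omega | (exfalso; first | assumption | omega)
    rw [← hdet, Matrix.det_succ_row_zero]
    rw [Finset.sum_eq_single_of_mem (1 : Fin (k+2)) (Finset.mem_univ _)
      (fun j _ hj => by rw [hrow j, if_neg hj]; ring)]
    rw [hrow, if_pos rfl, hsub, ih]
    simp [pow_succ]
    ring

lemma detA_succ (x a : R) (k : ℕ) :
    (Amat x a (k+1)).det = x * (Amat x a k).det - (x + a - 1) ^ k := by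
  have hAB : Amat x a (k+1) = Matrix.updateRow (Bmat x a (k+1)) 0
      (Bmat x a (k+1) 0 + x • (Pi.single (0 : Fin (k+1)) (1 : R) : Fin (k+1) → R)) := by
    ext i j
    simp only [Amat_val, Bmat_val, Matrix.updateRow_apply, Pi.add_apply, Pi.smul_apply,
      Pi.single_apply, smul_eq_mul, Fin.ext_iff, Fin.val_zero]
    split_ifs <;> first | ring1 | omega | (exfalso; first | assumption | omega) | (simp_all; intro hj; simp_all)
  have hE : (Matrix.updateRow (Bmat x a (k+1)) 0 (Pi.single (0 : Fin (k+1)) (1 : R) : Fin (k+1) → R)).det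
      = (Amat x a k).det := by
    set E := Matrix.updateRow (Bmat x a (k+1)) 0 (Pi.single (0 : Fin (k+1)) (1:R)) with hEdef
    have hsub : (E.submatrix Fin.succ Fin.succ) = Amat x a k := by
      ext i j
      rw [Matrix.submatrix_apply, hEdef, Matrix.updateRow_ne (Fin.succ_ne_zero i), Bmat_val,
        Amat_val, Fin.val_succ, Fin.val_succ]
      split_ifs <;> first | rfl | omega | (exfalso; first | assumption | omega)
    rw [Matrix.det_succ_row_zero]
    rw [Finset.sum_eq_single_of_mem (0 : Fin (k+1)) (Finset.mem_univ _)
      (fun j _ hj => by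
        rw [hEdef, Matrix.updateRow_self]
        rw [Pi.single_apply, if_neg hj]
        ring)]
    rw [hEdef, Matrix.updateRow_self, Pi.single_apply, if_pos rfl]
    rw [← hEdef]
    simp only [Fin.succAbove_zero, Fin.val_zero, pow_zero, one_mul, mul_one]
    rw [hsub]
  rw [hAB, Matrix.det_updateRow_add, Matrix.det_updateRow_smul, Matrix.updateRow_eq_self, hE,
    detB]
  ring

lemma detA_formula (x a : R) (k : ℕ) :
    (1 - a) * (Amat x a k).det = (x + a - 1) ^ k - a * x ^ k := by
  induction k with
  | zero => simp [Matrix.det_fin_zero]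
  | succ k ih =>
    rw [detA_succ]
    linear_combination ((1:R) - a) * ih * 0 + x * ih + ((x + a - 1) ^ k) * (0:R) + 
      (by ring : (1 - a) * (x * (Amat x a k).det - (x + a - 1) ^ k)
        = x * ((1 - a) * (Amat x a k).det) - (1 - a) * (x + a - 1) ^ k) + x * 0

lemma charpoly_eq_detA (a : R) (k : ℕ) (M : Matrix (Fin k) (Fin k) R)
    (hM : ∀ i j : Fin k, M i j = if i < j then a else 1) :
    M.charpoly = (Amat (X : R[X]) (C a) k).det := by
  unfold Matrix.charpoly
  congr 1
  ext i j
  by_cases h : i = j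
  · subst h
    rw [Matrix.charmatrix_apply_eq, hM]
    simp [Amat]
  · rw [Matrix.charmatrix_apply_ne _ _ _ h, hM]
    by_cases hlt : i < j
    · simp [Amat, h, hlt]
    · simp [Amat, h, hlt]

lemma charpoly_formula (a : R) (k : ℕ) (M : Matrix (Fin k) (Fin k) R)
    (hM : ∀ i j : Fin k, M i j = if i < j then a else 1) :
    (1 - a) • M.charpoly = (X + C (a - 1)) ^ k - a • X ^ k := by
  rw [charpoly_eq_detA a k M hM]
  rw [smul_eq_C_mul, smul_eq_C_mul, map_sub, _root_.map_one]
  rw [detA_formula (X : R[X]) (C a) k]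
  rw [map_sub, _root_.map_one]
  ring

lemma mem_spectrum_iff_eval {n : Type*} [Fintype n] [DecidableEq n]
    (A : Matrix n n ℂ) (μ : ℂ) :
    μ ∈ spectrum ℂ A ↔ A.charpoly.eval μ = 0 := by
  have hdet : A.charpoly.eval μ = ((algebraMap ℂ (Matrix n n ℂ)) μ - A).det := by
    unfold Matrix.charpoly
    rw [← Polynomial.coe_evalRingHom, RingHom.map_det]
    congr 1
    ext i j
    by_cases h : i = j
    · subst h
      simp [Matrix.map_apply, Matrix.charmatrix_apply_eq, Matrix.algebraMap_matrix_apply]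
    · simp [Matrix.map_apply, Matrix.charmatrix_apply_ne _ _ _ h,
        Matrix.algebraMap_matrix_apply, h]
  rw [spectrum.mem_iff, Matrix.isUnit_iff_isUnit_det, isUnit_iff_ne_zero, not_ne_iff, hdet]

/-- for the `k×k` matrix `M` with entries `|λ|²` strictly above the
diagonal and `1` elsewhere, the characteristic polynomial is
`((x-1+|λ|²)^k - |λ|² x^k)/(1-|λ|²)`, the complex eigenvalues are
`(|λ|²-1)/(|λ|^{2/k} e^{2πil/k} - 1)` for `l = 0,…,k-1`, and the spectral radius
is `(|λ|²-1)/(|λ|^{2/k}-1)`. -/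
theorem stmt10 (k : ℕ) (hk : 0 < k) (lam : ℂ) (hlam : lam ≠ 0)
    (h1 : ‖lam‖ ≠ 1)
    (M : Matrix (Fin k) (Fin k) ℝ)
    (hM : ∀ i j : Fin k, M i j = if i < j then (‖lam‖) ^ 2 else 1) :
    ((1 - (‖lam‖) ^ 2) • M.charpoly
        = (X + C ((‖lam‖) ^ 2 - 1)) ^ k - ((‖lam‖) ^ 2) • X ^ k)
    ∧ (spectrum ℂ (M.map (Complex.ofReal)) = Set.range fun l : Fin k =>
        (((‖lam‖) ^ 2 - 1 : ℝ) : ℂ) /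
          ((((‖lam‖) ^ ((2 : ℝ) / (k : ℝ)) : ℝ) : ℂ) *
            Complex.exp (2 * Real.pi * (l : ℕ) * Complex.I / (k : ℕ)) - 1))
    ∧ spectralRadius ℂ (M.map (Complex.ofReal))
        = ENNReal.ofReal
            (((‖lam‖) ^ 2 - 1) / ((‖lam‖) ^ ((2 : ℝ) / (k : ℝ)) - 1)) := by
  haveI : NeZero k := ⟨hk.ne'⟩
  set a : ℝ := (‖lam‖) ^ 2 with ha
  have habs : 0 < ‖lam‖ := norm_pos_iff.mpr hlam
  have ha0 : 0 < a := pow_pos habs 2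
  have ha1 : a ≠ 1 := by
    intro h
    exact h1 (by nlinarith)
  set w : ℝ := (‖lam‖) ^ ((2 : ℝ) / (k : ℝ)) with hwdef
  have hk0 : (k : ℝ) ≠ 0 := Nat.cast_ne_zero.mpr hk.ne'
  have hw0 : 0 < w := Real.rpow_pos_of_pos habs _
  have hwk : w ^ k = a := by
    rw [hwdef, ← Real.rpow_natCast (‖lam‖ ^ ((2:ℝ)/(k:ℝ))) k,
      ← Real.rpow_mul habs.le, div_mul_cancel₀ _ hk0]
    rw [show ((2:ℝ)) = ((2:ℕ):ℝ) by norm_num, Real.rpow_natCast]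
  have hw1 : w ≠ 1 := fun h => ha1 (by rw [← hwk, h, one_pow])
  -- the complex versions
  set N := M.map (Complex.ofReal) with hN
  have hNe : ∀ i j : Fin k, N i j = if i < j then ((a : ℝ) : ℂ) else 1 := by
    intro i j
    rw [hN, Matrix.map_apply, hM]
    split_ifs <;> simp
  -- part 1
  have part1 : (1 - a) • M.charpoly = (X + C (a - 1)) ^ k - a • X ^ k :=
    charpoly_formula a k M hM
  have part1C : (1 - ((a:ℝ):ℂ)) • N.charpoly = (X + C (((a:ℝ):ℂ) - 1)) ^ k - ((a:ℝ):ℂ) • X ^ k :=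
    charpoly_formula ((a:ℝ):ℂ) k N hNe
  have haC1 : ((a:ℝ):ℂ) ≠ 1 := by
    simpa [Complex.ofReal_eq_one] using ha1
  have haC0 : ((a:ℝ):ℂ) ≠ 0 := by
    simpa [Complex.ofReal_eq_zero] using ha0.ne'
  have hkC : ((k:ℕ):ℂ) ≠ 0 := Nat.cast_ne_zero.mpr hk.ne'
  -- eval characterization
  have hev : ∀ μ : ℂ, N.charpoly.eval μ = 0 ↔ (μ + (a:ℝ) - 1) ^ k = ((a:ℝ):ℂ) * μ ^ k := by
    intro μ
    have h := congrArg (Polynomial.eval μ) part1C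
    simp only [eval_smul, smul_eq_mul, eval_sub, eval_pow, eval_add, eval_X, eval_C,
      eval_mul] at h
    constructor
    · intro h0
      rw [h0, mul_zero] at h
      have h2 : (μ + ((a:ℝ):ℂ) - 1) ^ k - ((a:ℝ):ℂ) * μ ^ k = 0 := by
        rw [← h.symm]
        ring_nf
      linear_combination h2
    · intro heq
      have h2 : (1 - ((a:ℝ):ℂ)) * Polynomial.eval μ N.charpoly = 0 := by
        rw [h]
        linear_combination heq + (by ring : (μ + (((a:ℝ):ℂ) - 1)) ^ k = (μ + ((a:ℝ):ℂ) - 1) ^ k)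
      rcases mul_eq_zero.mp h2 with h3 | h3
      · exact absurd (by linear_combination -h3) haC1
      · exact h3
  -- exp facts
  have habs_exp : ∀ l : ℕ, ‖Complex.exp (2 * Real.pi * l * Complex.I / k)‖ = 1 := by
    intro l
    have harg : (2 * (Real.pi:ℂ) * l * Complex.I / k) = ((2 * Real.pi * l / k : ℝ) : ℂ) * Complex.I := by
      push_cast
      ring
    rw [harg, Complex.norm_exp_ofReal_mul_I]
  have habs_u : ∀ l : ℕ, ‖(w:ℂ) * Complex.exp (2 * Real.pi * l * Complex.I / k) - 1 + 1‖ = w := by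
    intro l
    rw [sub_add_cancel, norm_mul, habs_exp l, mul_one, Complex.norm_real, Real.norm_eq_abs, abs_of_pos hw0]
  have hu1 : ∀ l : ℕ, (w:ℂ) * Complex.exp (2 * Real.pi * l * Complex.I / k) - 1 ≠ 0 := by
    intro l h
    apply hw1
    have := habs_u l
    rw [h, zero_add, norm_one] at this
    exact this.symm
  have hwkC : ((w:ℝ):ℂ) ^ k = ((a:ℝ):ℂ) := by
    rw [← Complex.ofReal_pow, hwk]
  have hwC0 : ((w:ℝ):ℂ) ≠ 0 := by
    simpa [Complex.ofReal_eq_zero] using hw0.ne'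
  have huk : ∀ l : ℕ, ((w:ℂ) * Complex.exp (2 * Real.pi * l * Complex.I / k)) ^ k = ((a:ℝ):ℂ) := by
    intro l
    rw [mul_pow, hwkC, ← Complex.exp_nat_mul]
    have : ((k:ℕ):ℂ) * (2 * Real.pi * l * Complex.I / k) = (l : ℤ) * (2 * Real.pi * Complex.I) := by
      field_simp
      push_cast
      ring
    rw [this, Complex.exp_int_mul_two_pi_mul_I, mul_one]
  set F : Fin k → ℂ := fun l : Fin k =>
        (((‖lam‖) ^ 2 - 1 : ℝ) : ℂ) /
          ((((‖lam‖) ^ ((2 : ℝ) / (k : ℝ)) : ℝ) : ℂ) *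
            Complex.exp (2 * Real.pi * (l : ℕ) * Complex.I / (k : ℕ)) - 1) with hF
  have hFval : ∀ l : Fin k, F l = (((a - 1 : ℝ)) : ℂ) /
      ((w:ℂ) * Complex.exp (2 * Real.pi * (l : ℕ) * Complex.I / k) - 1) := by
    intro l
    rw [hF]
  -- the characterization of the spectrum
  have part2 : spectrum ℂ N = Set.range F := by
    ext μ
    rw [mem_spectrum_iff_eval, hev μ]
    constructor
    · intro hμ
      have hμ0 : μ ≠ 0 := by
        rintro rfl
        rw [zero_pow hk.ne', mul_zero, zero_add] at hμ
        have h4 : ((a:ℝ):ℂ) - 1 = 0 := pow_eq_zero_iff hk.ne' |>.mp hμ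
        exact haC1 (by linear_combination h4)
      have hξ : ((μ + ((a:ℝ):ℂ) - 1) / (((w:ℝ):ℂ) * μ)) ^ k = 1 := by
        rw [div_pow, mul_pow, hwkC, ← hμ]
        exact div_self (by
          rw [hμ]
          exact mul_ne_zero haC0 (pow_ne_zero _ hμ0))
      obtain ⟨l, hl, hζl⟩ :=
        (Complex.isPrimitiveRoot_exp k hk.ne').eq_pow_of_pow_eq_one hξ
      have hexp : Complex.exp (2 * Real.pi * Complex.I / k) ^ l
          = Complex.exp (2 * Real.pi * l * Complex.I / k) := by
        rw [← Complex.exp_nat_mul]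
        congr 1
        ring
      rw [hexp, eq_div_iff (mul_ne_zero hwC0 hμ0)] at hζl
      -- hζl : exp(2π l I/k) * (w * μ) = μ + a - 1
      refine ⟨⟨l, hl⟩, ?_⟩
      rw [hFval]
      have hcast : ((⟨l, hl⟩ : Fin k) : ℕ) = l := rfl
      rw [hcast]
      rw [div_eq_iff (hu1 l)]
      push_cast
      linear_combination -hζl
    · rintro ⟨l, rfl⟩
      rw [hFval l]
      set u : ℂ := (w:ℂ) * Complex.exp (2 * Real.pi * ((l:Fin k) : ℕ) * Complex.I / k) with hu
      have hrel : (((a - 1 : ℝ)) : ℂ) / (u - 1) * (u - 1) = ((a:ℝ):ℂ) - 1 := by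
        rw [div_mul_cancel₀ _ (hu1 _)]
        push_cast
        ring
      set μ := (((a - 1 : ℝ)) : ℂ) / (u - 1) with hμdef
      have hstep : μ + ((a:ℝ):ℂ) - 1 = μ * u := by
        linear_combination -hrel
      rw [hstep, mul_pow, huk _, mul_comm]
  refine ⟨part1, part2, ?_⟩
  -- spectral radius
  have hr0 : 0 ≤ (a - 1) / (w - 1) := by
    rcases lt_or_gt_of_ne h1 with hlt | hgt
    · have haa : a < 1 := by nlinarith
      have hww : w < 1 := Real.rpow_lt_one habs.le hlt (by positivity)
      exact div_nonneg_iff.mpr (Or.inr ⟨by linarith, by linarith⟩)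
    · have haa : 1 < a := by nlinarith
      have hww : 1 < w := (Real.one_lt_rpow_iff_of_pos habs).mpr (Or.inl ⟨hgt, by positivity⟩)
      exact div_nonneg (by linarith) (by linarith)
  have hwne : w - 1 ≠ 0 := sub_ne_zero.mpr hw1
  have hF0 : F 0 = ((((a - 1) / (w - 1)) : ℝ) : ℂ) := by
    rw [hFval 0]
    have : ((0 : Fin k) : ℕ) = 0 := rfl
    rw [this]
    push_cast
    norm_num [Complex.exp_zero]
  have hkey : ∀ z : ℂ, ‖z‖ = 1 → |w - 1| ≤ ‖(w:ℂ) * z - 1‖ := by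
    intro z hz
    have hre : z.re ≤ 1 := le_trans (Complex.re_le_norm z) (le_of_eq hz)
    have hnsq : z.re ^ 2 + z.im ^ 2 = 1 := by
      have h5 := Complex.sq_norm z
      rw [hz] at h5
      simpa [Complex.normSq_apply, sq] using h5.symm
    have h2 : (w - 1) ^ 2 ≤ Complex.normSq ((w:ℂ) * z - 1) := by
      simp only [Complex.normSq_apply, Complex.sub_re, Complex.sub_im, Complex.mul_re,
        Complex.mul_im, Complex.ofReal_re, Complex.ofReal_im, Complex.one_re, Complex.one_im]
      nlinarith [hw0.le, hre, hnsq]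
    calc |w - 1| = Real.sqrt ((w - 1) ^ 2) := (Real.sqrt_sq_eq_abs _).symm
      _ ≤ Real.sqrt (Complex.normSq ((w:ℂ) * z - 1)) := Real.sqrt_le_sqrt h2
      _ = ‖(w:ℂ) * z - 1‖ := by rw [Complex.norm_def]
  have hnorm : ∀ l : Fin k, ‖F l‖ ≤ ‖F 0‖ := by
    intro l
    rw [hFval l, hF0]
    rw [norm_div]
    have hnum : ‖(((a - 1:ℝ)) : ℂ)‖ = |a - 1| := by rw [Complex.norm_real, Real.norm_eq_abs]
    have hden : |w - 1| ≤ ‖(w:ℂ) * Complex.exp (2 * Real.pi * ((l:Fin k):ℕ) * Complex.I / k) - 1‖ := by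
      exact hkey _ (habs_exp _)
    have hF0norm : ‖((((a - 1) / (w - 1)) : ℝ) : ℂ)‖ = |a - 1| / |w - 1| := by
      rw [Complex.norm_real, Real.norm_eq_abs, abs_div]
    rw [hnum, hF0norm]
    have habs1 : 0 < |w - 1| := abs_pos.mpr hwne
    gcongr
  have hrad : spectralRadius ℂ N = ⨆ l : Fin k, (‖F l‖₊ : ENNReal) := by
    rw [spectralRadius.eq_1, part2, iSup_range]
  rw [hrad]
  have hle : ∀ l : Fin k, (‖F l‖₊ : ENNReal) ≤ (‖F 0‖₊ : ENNReal) := by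
    intro l
    rw [ENNReal.coe_le_coe, ← NNReal.coe_le_coe, coe_nnnorm, coe_nnnorm]
    exact hnorm l
  have hsup : (⨆ l : Fin k, (‖F l‖₊ : ENNReal)) = (‖F 0‖₊ : ENNReal) :=
    le_antisymm (iSup_le hle) (le_iSup (fun l : Fin k => (‖F l‖₊ : ENNReal)) 0)
  rw [hsup, hF0]
  rw [← Real.enorm_eq_ofReal hr0, enorm_eq_nnnorm]
  congr 1
  ext
  rw [coe_nnnorm, coe_nnnorm, Complex.norm_real]
end
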